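/- There exists x₀ such that for every real x ≥ x₀ and every integer N the following holds: setting z = x/2, y = ⌊0.08·x⌋ and P(z) = ∏_{p ≤ z} p, there exists a residue b′ modulo P(z) such that |(S_z − b′) ∩ [−y, y]| + |(S_z − N + b′) ∩ [−y, y]| ≤ 0.4·x/log x. -/

import Mathlib

open Finset
open scoped Classical

noncomputable section

/-- The finset of primes `p ≤ u`. -/
def primesLE (u : ℝ) : Finset ℕ :=
  (Finset.range (Nat.floor u + 1)).filter fun p => p.Prime ∧ (p : ℝ) ≤ u

/-- The finset of primes `u < p ≤ v`. -/
def primesIn (u v : ℝ) : Finset ℕ :=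
  (primesLE v).filter fun p => u < (p : ℝ)

/-- `P(u) = ∏_{p ≤ u} p`. -/
def Pprod (u : ℝ) : ℕ := ∏ p ∈ primesLE u, p

/-- `σ(u) = ∏_{p ≤ u} (1 - 1/p)`. -/
def sigmaLE (u : ℝ) : ℝ := ∏ p ∈ primesLE u, (1 - 1 / (p : ℝ))

/-- `S_u`: the set of integers not divisible by any prime `p ≤ u`. -/
def Sset (u : ℝ) : Set ℤ := {n : ℤ | ∀ p ∈ primesLE u, ¬((p : ℤ) ∣ n)}

/-- `S_{u,v}`: the set of integers not divisible by any prime `u < p ≤ v`. -/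
def SsetIn (u v : ℝ) : Set ℤ := {n : ℤ | ∀ p ∈ primesIn u v, ¬((p : ℤ) ∣ n)}

lemma primesLE_prime {u : ℝ} {p : ℕ} (hp : p ∈ primesLE u) : p.Prime :=
  ((Finset.mem_filter.mp hp).2).1

lemma mem_primesLE {u : ℝ} {p : ℕ} :
    p ∈ primesLE u ↔ p.Prime ∧ (p : ℝ) ≤ u := by
  constructor
  · exact fun h => (Finset.mem_filter.mp h).2
  · rintro ⟨h1, h2⟩
    refine Finset.mem_filter.mpr ⟨Finset.mem_range.mpr ?_, h1, h2⟩
    have := Nat.le_floor h2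
    omega

lemma Pprod_pos (u : ℝ) : 0 < Pprod u :=
  Finset.prod_pos fun p hp => (primesLE_prime hp).pos

lemma totient_prod_primes {s : Finset ℕ} (h : ∀ p ∈ s, p.Prime) :
    Nat.totient (∏ p ∈ s, p) = ∏ p ∈ s, (p - 1) := by
  induction s using Finset.induction with
  | empty => simp
  | @insert a s ha ih =>
      have hap : a.Prime := h a (mem_insert_self a s)
      have hcop : Nat.Coprime a (∏ p ∈ s, p) :=
        Nat.Coprime.prod_right fun q hq =>
          (Nat.coprime_primes hap (h q (mem_insert_of_mem hq))).mpr
            (by rintro rfl; exact ha hq)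
      rw [prod_insert ha, prod_insert ha, Nat.totient_mul hcop, Nat.totient_prime hap,
        ih fun p hp => h p (mem_insert_of_mem hp)]

lemma sset_iff_isUnit (z : ℝ) (m : ℤ) :
    m ∈ Sset z ↔ IsUnit ((m : ZMod (Pprod z))) := by
  constructor
  · intro h
    have hcop : IsCoprime m (Pprod z : ℤ) := by
      rw [Int.isCoprime_iff_gcd_eq_one]
      by_contra hg
      obtain ⟨q, hq, hqg⟩ := Nat.exists_prime_and_dvd hg
      have hqP : q ∣ Pprod z := by
        have h1 : (q : ℤ) ∣ (Pprod z : ℤ) :=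
          dvd_trans (Int.natCast_dvd_natCast.mpr hqg) (Int.gcd_dvd_right _ _)
        exact_mod_cast h1
      obtain ⟨p, hps, hqp⟩ := (Prime.dvd_finset_prod_iff hq.prime _).mp hqP
      have hpq : q = p := (Nat.prime_dvd_prime_iff_eq hq (primesLE_prime hps)).mp hqp
      refine h p hps ?_
      rw [← hpq]
      exact dvd_trans (Int.natCast_dvd_natCast.mpr hqg) (Int.gcd_dvd_left _ _)
    obtain ⟨u, v, huv⟩ := hcop
    have h1 : (u : ZMod (Pprod z)) * (m : ZMod (Pprod z)) = 1 := by
      have h2 := congrArg (fun t : ℤ => (t : ZMod (Pprod z))) huv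
      push_cast at h2
      simpa [ZMod.natCast_self] using h2
    exact IsUnit.of_mul_eq_one _ (by rw [mul_comm]; exact h1)
  · intro hu p hp hdvd
    haveI : Fact p.Prime := ⟨primesLE_prime hp⟩
    have hpd : p ∣ Pprod z := Finset.dvd_prod_of_mem _ hp
    have h1 : IsUnit ((m : ZMod p)) := by
      have := hu.map (ZMod.castHom hpd (ZMod p))
      rwa [map_intCast] at this
    rw [(ZMod.intCast_zmod_eq_zero_iff_dvd m p).mpr hdvd] at h1
    exact h1.ne_zero rfl

def unitsEquivIsUnit' (M : Type*) [Monoid M] : Mˣ ≃ {x : M // IsUnit x} where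
  toFun u := ⟨u, u.isUnit⟩
  invFun x := x.2.unit
  left_inv u := Units.ext (by simp)
  right_inv x := Subtype.ext (by simp)

lemma card_filter_isUnit (P : ℕ) [NeZero P] :
    (Finset.univ.filter fun c : ZMod P => IsUnit c).card = Nat.totient P := by
  rw [← Fintype.card_subtype, ← ZMod.card_units_eq_totient P]
  exact (Fintype.card_congr (unitsEquivIsUnit' (ZMod P))).symm

lemma card_filter_add (P : ℕ) [NeZero P] (a : ZMod P) :
    (Finset.univ.filter fun c : ZMod P => IsUnit (a + c)).card = Nat.totient P := by
  rw [← card_filter_isUnit P]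
  refine Finset.card_bij (fun c _ => a + c) ?_ ?_ ?_
  · intro c hc
    exact Finset.mem_filter.mpr ⟨Finset.mem_univ _, (Finset.mem_filter.mp hc).2⟩
  · intro c _ d _ h
    exact add_left_cancel h
  · intro u hu
    refine ⟨u - a, Finset.mem_filter.mpr ⟨Finset.mem_univ _, ?_⟩, by ring⟩
    have h2 := (Finset.mem_filter.mp hu).2
    simpa [add_sub_cancel] using h2

lemma card_filter_sub (P : ℕ) [NeZero P] (a : ZMod P) :
    (Finset.univ.filter fun c : ZMod P => IsUnit (a - c)).card = Nat.totient P := by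
  rw [← card_filter_isUnit P]
  refine Finset.card_bij (fun c _ => a - c) ?_ ?_ ?_
  · intro c hc
    exact Finset.mem_filter.mpr ⟨Finset.mem_univ _, (Finset.mem_filter.mp hc).2⟩
  · intro c _ d _ h
    have h2 : a - c = a - d := h
    linear_combination -h2
  · intro u hu
    refine ⟨a - u, Finset.mem_filter.mpr ⟨Finset.mem_univ _, ?_⟩, by ring⟩
    have h2 := (Finset.mem_filter.mp hu).2
    simpa [sub_sub_cancel] using h2

set_option maxHeartbeats 1000000 in
lemma sum_inv_le_prod (z : ℝ) (hz : 1 ≤ z) :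
    ∑ n ∈ Finset.Icc 1 (Nat.floor z), (1 / (n : ℝ)) ≤
      ∏ p ∈ primesLE z, (1 - 1 / (p : ℝ))⁻¹ := by
  have hz0 : (0:ℝ) ≤ z := le_trans zero_le_one hz
  set N := Nat.floor z with hN
  set s := primesLE z with hs
  have hfac : ∀ n ∈ Finset.Icc 1 N, ∏ p ∈ s, p ^ n.factorization p = n := by
    intro n hn
    obtain ⟨h1, h2⟩ := Finset.mem_Icc.mp hn
    have hn0 : n ≠ 0 := by omega
    have hsupp : n.factorization.support ⊆ s := by
      intro p hp
      rw [Nat.support_factorization] at hp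
      have hpp : p.Prime := Nat.prime_of_mem_primeFactors hp
      have hple : p ≤ n := Nat.le_of_dvd (by omega) (Nat.dvd_of_mem_primeFactors hp)
      refine mem_primesLE.mpr ⟨hpp, ?_⟩
      calc (p : ℝ) ≤ (N : ℝ) := by exact_mod_cast le_trans hple h2
        _ ≤ z := Nat.floor_le hz0
    calc ∏ p ∈ s, p ^ n.factorization p
        = n.factorization.prod (· ^ ·) :=
          (Finsupp.prod_of_support_subset _ hsupp _ (by simp)).symm
      _ = n := Nat.factorization_prod_pow_eq_self hn0
  have key : ∑ n ∈ Finset.Icc 1 N, (1 / (n : ℝ)) ≤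
      ∏ p ∈ s, ∑ k ∈ Finset.range (N + 1), ((1 : ℝ) / p) ^ k := by
    rw [Finset.prod_sum]
    set Φ : ℕ → (∀ a ∈ s, ℕ) := fun n => fun p _ => n.factorization p with hΦ
    have hterm : ∀ n ∈ Finset.Icc 1 N,
        (1 / (n : ℝ)) = ∏ p ∈ s.attach, ((1 : ℝ) / (p.1 : ℝ)) ^ (Φ n p.1 p.2) := by
      intro n hn
      have : ∏ p ∈ s.attach, ((1 : ℝ) / (p.1 : ℝ)) ^ (Φ n p.1 p.2)
          = ∏ p ∈ s, ((1 : ℝ) / (p : ℝ)) ^ (n.factorization p) := by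
        rw [← Finset.prod_attach s fun p => ((1:ℝ)/(p:ℝ)) ^ n.factorization p]
      rw [this]
      have hcast : ((∏ p ∈ s, p ^ n.factorization p : ℕ) : ℝ) = (n : ℝ) := by
        exact_mod_cast congrArg (Nat.cast : ℕ → ℝ) (hfac n hn)
      rw [← hcast]
      push_cast
      rw [one_div, ← Finset.prod_inv_distrib]
      refine Finset.prod_congr rfl fun p _ => ?_
      rw [one_div, inv_pow]
    have hinj : ∀ n ∈ Finset.Icc 1 N, ∀ m ∈ Finset.Icc 1 N, Φ n = Φ m → n = m := by
      intro n hn m hm h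
      have : ∀ p ∈ s, n.factorization p = m.factorization p := by
        intro p hp
        exact congrFun (congrFun h p) hp
      rw [← hfac n hn, ← hfac m hm]
      exact Finset.prod_congr rfl fun p hp => by rw [this p hp]
    have himg : ∀ n ∈ Finset.Icc 1 N, Φ n ∈ s.pi fun _ => Finset.range (N + 1) := by
      intro n hn
      obtain ⟨h1, h2⟩ := Finset.mem_Icc.mp hn
      refine Finset.mem_pi.mpr fun p hp => Finset.mem_range.mpr ?_
      show n.factorization p < N + 1
      have := Nat.factorization_lt p (show n ≠ 0 by omega)
      omega
    calc ∑ n ∈ Finset.Icc 1 N, (1 / (n : ℝ))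
        = ∑ n ∈ Finset.Icc 1 N, ∏ p ∈ s.attach, ((1 : ℝ) / (p.1 : ℝ)) ^ (Φ n p.1 p.2) :=
          Finset.sum_congr rfl hterm
      _ = ∑ g ∈ (Finset.Icc 1 N).image Φ, ∏ p ∈ s.attach, ((1 : ℝ) / (p.1 : ℝ)) ^ (g p.1 p.2) :=
          (Finset.sum_image (f := fun (g : ∀ a ∈ s, ℕ) =>
            ∏ p ∈ s.attach, ((1 : ℝ) / (p.1 : ℝ)) ^ (g p.1 p.2)) hinj).symm
      _ ≤ ∑ g ∈ s.pi fun _ => Finset.range (N + 1),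
            ∏ p ∈ s.attach, ((1 : ℝ) / (p.1 : ℝ)) ^ (g p.1 p.2) := by
          refine Finset.sum_le_sum_of_subset_of_nonneg ?_ fun g _ _ => ?_
          · intro g hg
            obtain ⟨n, hn, rfl⟩ := Finset.mem_image.mp hg
            exact himg n hn
          · exact Finset.prod_nonneg fun p _ => pow_nonneg (by positivity) _
  refine le_trans key (Finset.prod_le_prod ?_ ?_)
  · intro p _
    exact Finset.sum_nonneg fun k _ => pow_nonneg (by positivity) _
  · intro p hp
    have hp2 : 2 ≤ p := (primesLE_prime hp).two_le
    have h0 : (0:ℝ) ≤ 1 / (p:ℝ) := by positivity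
    have h1 : (1:ℝ) / (p:ℝ) < 1 := by
      rw [div_lt_one (by exact_mod_cast Nat.lt_of_lt_of_le Nat.zero_lt_two hp2)]
      exact_mod_cast Nat.lt_of_lt_of_le Nat.one_lt_two hp2
    have hsummable : Summable fun k : ℕ => ((1:ℝ)/p) ^ k :=
      summable_geometric_of_lt_one h0 h1
    calc ∑ k ∈ Finset.range (N+1), ((1:ℝ)/p) ^ k
        ≤ ∑' k : ℕ, ((1:ℝ)/p) ^ k :=
          Summable.sum_le_tsum _ (fun k _ => pow_nonneg h0 _) hsummable
      _ = (1 - 1/(p:ℝ))⁻¹ := tsum_geometric_of_lt_one h0 h1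

lemma sigmaLE_pos (z : ℝ) : 0 < sigmaLE z := by
  refine Finset.prod_pos fun p hp => ?_
  have hp2 : 2 ≤ p := (primesLE_prime hp).two_le
  have : (1:ℝ)/(p:ℝ) < 1 := by
    rw [div_lt_one (by exact_mod_cast Nat.lt_of_lt_of_le Nat.zero_lt_two hp2)]
    exact_mod_cast Nat.lt_of_lt_of_le Nat.one_lt_two hp2
  linarith

lemma sigmaLE_le (z : ℝ) (hz : 2 ≤ z) : sigmaLE z ≤ 1 / Real.log z := by
  have hσ := sigmaLE_pos z
  have hlog : 0 < Real.log z := Real.log_pos (by linarith)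
  have h1 : Real.log z ≤ ∑ n ∈ Finset.Icc 1 (Nat.floor z), (1 / (n : ℝ)) := by
    have := log_le_harmonic_floor z (by linarith)
    rw [harmonic_eq_sum_Icc] at this
    push_cast at this
    simpa [one_div] using this
  have h2 := sum_inv_le_prod z (by linarith)
  have h3 : ∏ p ∈ primesLE z, (1 - 1/(p:ℝ))⁻¹ = (sigmaLE z)⁻¹ := by
    rw [sigmaLE, ← Finset.prod_inv_distrib]
  have h4 : Real.log z ≤ (sigmaLE z)⁻¹ := by
    rw [← h3]; exact le_trans h1 h2
  rw [le_div_iff₀ hlog]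
  calc sigmaLE z * Real.log z ≤ sigmaLE z * (sigmaLE z)⁻¹ :=
        mul_le_mul_of_nonneg_left h4 hσ.le
    _ = 1 := mul_inv_cancel₀ hσ.ne'

lemma totient_Pprod (z : ℝ) : (Nat.totient (Pprod z) : ℝ) = (Pprod z : ℝ) * sigmaLE z := by
  rw [Pprod, totient_prod_primes fun p hp => primesLE_prime hp, sigmaLE]
  rw [Nat.cast_prod, Nat.cast_prod, ← Finset.prod_mul_distrib]
  refine Finset.prod_congr rfl fun p hp => ?_
  have hp0 : (p:ℝ) ≠ 0 := by
    have := (primesLE_prime hp).pos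
    positivity
  rw [Nat.cast_sub (primesLE_prime hp).one_lt.le]
  push_cast
  field_simp

theorem small_double_shift :
    ∃ x₀ : ℝ, ∀ x : ℝ, x₀ ≤ x → ∀ N : ℤ,
      ∃ b : ℕ, b < Pprod (x / 2) ∧
        (((Finset.Icc (-(Nat.floor (0.08 * x) : ℤ)) (Nat.floor (0.08 * x) : ℤ)).filter
            fun n => n + (b : ℤ) ∈ Sset (x / 2)).card : ℝ)
          + (((Finset.Icc (-(Nat.floor (0.08 * x) : ℤ)) (Nat.floor (0.08 * x) : ℤ)).filter
            fun n => n + (N - (b : ℤ)) ∈ Sset (x / 2)).card : ℝ)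
          ≤ 0.4 * x / Real.log x := by
  refine ⟨3000, fun x hx N => ?_⟩
  have hx0 : (0:ℝ) < x := by linarith
  set z := x / 2 with hzdef
  have hz2 : (2:ℝ) ≤ z := by rw [hzdef]; linarith
  set P := Pprod z with hPdef
  haveI : NeZero P := ⟨(Pprod_pos z).ne'⟩
  set y := Nat.floor (0.08 * x) with hy
  set I : Finset ℤ := Finset.Icc (-(y:ℤ)) (y:ℤ) with hI
  -- average count over residues
  have hsumN : ∑ c : ZMod P,
      ((I.filter fun n : ℤ => IsUnit ((n : ZMod P) + c)).card
        + (I.filter fun n : ℤ => IsUnit (((n + N : ℤ) : ZMod P) - c)).card)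
      = I.card * (2 * Nat.totient P) := by
    rw [Finset.sum_add_distrib]
    have e1 : ∑ c : ZMod P, (I.filter fun n : ℤ => IsUnit ((n : ZMod P) + c)).card
        = I.card * Nat.totient P := by
      calc ∑ c : ZMod P, (I.filter fun n : ℤ => IsUnit ((n : ZMod P) + c)).card
          = ∑ c : ZMod P, ∑ n ∈ I, if IsUnit ((n : ZMod P) + c) then 1 else 0 := by
            simp_rw [Finset.card_filter]
        _ = ∑ n ∈ I, ∑ c : ZMod P, if IsUnit ((n : ZMod P) + c) then 1 else 0 :=
            Finset.sum_comm
        _ = ∑ n ∈ I, (Finset.univ.filter fun c : ZMod P => IsUnit ((n : ZMod P) + c)).card := by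
            simp_rw [Finset.card_filter]
        _ = ∑ n ∈ I, Nat.totient P := Finset.sum_congr rfl fun n _ => card_filter_add P _
        _ = I.card * Nat.totient P := by rw [Finset.sum_const, smul_eq_mul]
    have e2 : ∑ c : ZMod P, (I.filter fun n : ℤ => IsUnit (((n + N : ℤ) : ZMod P) - c)).card
        = I.card * Nat.totient P := by
      calc ∑ c : ZMod P, (I.filter fun n : ℤ => IsUnit (((n + N : ℤ) : ZMod P) - c)).card
          = ∑ c : ZMod P, ∑ n ∈ I, if IsUnit (((n + N : ℤ) : ZMod P) - c) then 1 else 0 := by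
            simp_rw [Finset.card_filter]
        _ = ∑ n ∈ I, ∑ c : ZMod P, if IsUnit (((n + N : ℤ) : ZMod P) - c) then 1 else 0 :=
            Finset.sum_comm
        _ = ∑ n ∈ I, (Finset.univ.filter
              fun c : ZMod P => IsUnit (((n + N : ℤ) : ZMod P) - c)).card := by
            simp_rw [Finset.card_filter]
        _ = ∑ n ∈ I, Nat.totient P := Finset.sum_congr rfl fun n _ => card_filter_sub P _
        _ = I.card * Nat.totient P := by rw [Finset.sum_const, smul_eq_mul]
    rw [e1, e2]; ring
  -- pigeonhole
  have hne : (Finset.univ : Finset (ZMod P)).Nonempty := ⟨0, Finset.mem_univ 0⟩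
  have hpig : ∃ c ∈ (Finset.univ : Finset (ZMod P)),
      ((((I.filter fun n : ℤ => IsUnit ((n : ZMod P) + c)).card : ℝ))
        + (((I.filter fun n : ℤ => IsUnit (((n + N : ℤ) : ZMod P) - c)).card : ℝ)))
      ≤ (I.card : ℝ) * (2 * (Nat.totient P : ℝ)) / P := by
    refine Finset.exists_le_of_sum_le hne ?_
    have hcast : ∑ c : ZMod P,
        ((((I.filter fun n : ℤ => IsUnit ((n : ZMod P) + c)).card : ℝ))
          + (((I.filter fun n : ℤ => IsUnit (((n + N : ℤ) : ZMod P) - c)).card : ℝ)))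
        = (I.card : ℝ) * (2 * (Nat.totient P : ℝ)) := by
      have h := congrArg (Nat.cast : ℕ → ℝ) hsumN
      push_cast at h ⊢
      exact h
    rw [hcast, Finset.sum_const, nsmul_eq_mul, Finset.card_univ, ZMod.card P,
      mul_div_cancel₀]
    exact_mod_cast (Pprod_pos z).ne'
  obtain ⟨c₀, _, hc₀⟩ := hpig
  refine ⟨c₀.val, ZMod.val_lt c₀, ?_⟩
  -- identify the two filters
  have hval : ((c₀.val : ℕ) : ZMod P) = c₀ := ZMod.natCast_rightInverse c₀
  have hfil1 : (I.filter fun n => n + (c₀.val : ℤ) ∈ Sset z)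
      = I.filter fun n : ℤ => IsUnit ((n : ZMod P) + c₀) := by
    refine Finset.filter_congr fun n _ => ?_
    rw [sset_iff_isUnit z (n + (c₀.val : ℤ)), ← hPdef]
    have : (((n + (c₀.val : ℤ)) : ℤ) : ZMod P) = (n : ZMod P) + c₀ := by
      push_cast
      rw [hval]
    rw [this]
  have hfil2 : (I.filter fun n => n + (N - (c₀.val : ℤ)) ∈ Sset z)
      = I.filter fun n : ℤ => IsUnit (((n + N : ℤ) : ZMod P) - c₀) := by
    refine Finset.filter_congr fun n _ => ?_
    rw [sset_iff_isUnit z (n + (N - (c₀.val : ℤ))), ← hPdef]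
    have : (((n + (N - (c₀.val : ℤ))) : ℤ) : ZMod P) = ((n + N : ℤ) : ZMod P) - c₀ := by
      push_cast
      rw [hval]
      ring
    rw [this]
  rw [hfil1, hfil2]
  -- numeric bound
  have hφ : (Nat.totient P : ℝ) = (P : ℝ) * sigmaLE z := totient_Pprod z
  have hIcard : I.card = 2 * y + 1 := by
    rw [hI, Int.card_Icc]
    omega
  have hy08 : (y:ℝ) ≤ 0.08 * x := Nat.floor_le (by positivity)
  have hσpos := sigmaLE_pos z
  have hσle := sigmaLE_le z hz2
  have hlogz : Real.log z = Real.log x - Real.log 2 := by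
    rw [hzdef, Real.log_div hx0.ne' two_ne_zero]
  have hL : (8:ℝ) ≤ Real.log x := by
    rw [Real.le_log_iff_exp_le hx0]
    calc Real.exp 8 = Real.exp 1 ^ 8 := by
          rw [Real.exp_one_pow]; norm_num
      _ ≤ 2.7182818286 ^ 8 := by
          exact pow_le_pow_left₀ (Real.exp_pos 1).le Real.exp_one_lt_d9.le 8
      _ ≤ 3000 := by norm_num
      _ ≤ x := hx
  have hl2 : Real.log 2 < 0.6931471808 := Real.log_two_lt_d9
  have hl2pos : 0 < Real.log 2 := Real.log_pos one_lt_two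
  have hlogzpos : 0 < Real.log z := by rw [hlogz]; linarith
  have hlogxpos : 0 < Real.log x := by linarith
  have hPpos : (0:ℝ) < (P:ℝ) := by exact_mod_cast Pprod_pos z
  calc (((I.filter fun n : ℤ => IsUnit ((n : ZMod P) + c₀)).card : ℝ))
        + (((I.filter fun n : ℤ => IsUnit (((n + N : ℤ) : ZMod P) - c₀)).card : ℝ))
      ≤ (I.card : ℝ) * (2 * (Nat.totient P : ℝ)) / P := hc₀
    _ = (I.card : ℝ) * 2 * sigmaLE z := by
        rw [hφ]
        field_simp
    _ ≤ (0.32 * x + 2) * (1 / Real.log z) := by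
        refine mul_le_mul ?_ hσle hσpos.le (by norm_num; linarith)
        rw [hIcard]
        push_cast
        linarith
    _ ≤ 0.4 * x / Real.log x := by
        rw [hlogz, one_div, mul_comm, ← div_eq_inv_mul ..]
        rw [div_le_div_iff₀ (by linarith) hlogxpos]
        nlinarith [mul_nonneg (sub_nonneg.mpr hx) (sub_nonneg.mpr hL),
          mul_nonneg (sub_nonneg.mpr hx) hl2pos.le,
          mul_nonneg (sub_nonneg.mpr hL) hx0.le,
          mul_nonneg (sub_nonneg.mpr hl2.le) hx0.le]
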